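/- The average normalized purity χ = (N+1/2)^{n_A} · 𝔼_A[det(V_A)^{−1/2}], averaged over all ⌊n/2⌋-element subsets A, satisfies χ ≥ 1 for every symmetric positive definite 2n×2n matrix V whose diagonal 2×2 blocks each have trace at most 2(N+1/2). -/

import Mathlib

open Matrix Finset

/-- Determinant of the principal block submatrix of `V` on the modes in `A`. -/
noncomputable def subdet (n : ℕ) (V : Matrix (Fin n × Fin 2) (Fin n × Fin 2) ℝ)
    (A : Finset (Fin n)) : ℝ :=
  (V.submatrix (fun p : { i : Fin n // i ∈ A } × Fin 2 => (p.1.1, p.2))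
    (fun p : { i : Fin n // i ∈ A } × Fin 2 => (p.1.1, p.2))).det

section Aux
set_option linter.unusedSectionVars false

variable {ι : Type*} [Fintype ι] [DecidableEq ι] {κ : Type*} [Fintype κ] [DecidableEq κ]

lemma diag_pos' {M : Matrix ι ι ℝ} (hM : M.PosDef) (i : ι) : 0 < M i i := by
  have h := hM.dotProduct_mulVec_pos (x := Pi.single i 1) (by intro h; simpa using congrFun h i)
  simpa using h

lemma trace_eq_sum_eigs' {M : Matrix ι ι ℝ} (hM : M.IsHermitian) :
    M.trace = ∑ i, hM.eigenvalues i := by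
  conv_lhs => rw [hM.spectral_theorem]
  rw [Unitary.conjStarAlgAut_apply, Matrix.trace_mul_cycle, Unitary.coe_star_mul_self, Matrix.one_mul, Matrix.trace_diagonal]
  simp

lemma posdef_conj' {M : Matrix ι ι ℝ} (hM : M.PosDef) (B : Matrix ι κ ℝ)
    (hB : ∀ x : κ → ℝ, x ≠ 0 → B *ᵥ x ≠ 0) : (Bᴴ * M * B).PosDef := by
  refine Matrix.PosDef.of_dotProduct_mulVec_pos ?_ ?_
  · exact isHermitian_conjTranspose_mul_mul B hM.1
  · intro x hx
    simpa only [star_mulVec, dotProduct_mulVec, vecMul_vecMul] using hM.dotProduct_mulVec_pos (hB x hx)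

lemma posdef_submatrix' {M : Matrix ι ι ℝ} (hM : M.PosDef) (e : κ → ι)
    (he : Function.Injective e) : (M.submatrix e e).PosDef := by
  have hB : ∀ x : κ → ℝ, x ≠ 0 → (1 : Matrix ι ι ℝ).submatrix id e *ᵥ x ≠ 0 := by
    intro x hx h
    apply hx
    funext i
    have := congrFun h (e i)
    simpa [Matrix.mulVec, dotProduct, Matrix.one_apply, he.eq_iff] using this
  rw [(by simp : M = 1 * M * 1), submatrix_mul (he₂ := Function.bijective_id),
    submatrix_mul (he₂ := Function.bijective_id), submatrix_id_id]
  simpa only [conjTranspose_submatrix, conjTranspose_one] using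
    posdef_conj' hM ((1 : Matrix ι ι ℝ).submatrix id e) hB

lemma hadamard' {M : Matrix ι ι ℝ} (hM : M.PosDef) : M.det ≤ ∏ i, M i i := by
  rcases isEmpty_or_nonempty ι with h | h
  · simp [Matrix.det_isEmpty]
  have hd : ∀ i, 0 < M i i := diag_pos' hM
  set s : ι → ℝ := fun i => Real.sqrt (M i i)⁻¹ with hsdef
  have hs : ∀ i, 0 < s i := fun i => Real.sqrt_pos.mpr (inv_pos.mpr (hd i))
  have hs2 : ∀ i, s i * s i = (M i i)⁻¹ := fun i =>
    Real.mul_self_sqrt (inv_nonneg.mpr (hd i).le)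
  set D : Matrix ι ι ℝ := Matrix.diagonal s with hD
  have hDh : Dᴴ = D := by
    simp [hD, Matrix.diagonal_conjTranspose]
  have hM' : (Dᴴ * M * D).PosDef := by
    refine posdef_conj' hM D (fun x hx h => hx ?_)
    funext i
    have := congrFun h i
    simp only [hD, Matrix.mulVec_diagonal, Pi.zero_apply] at this
    have := mul_eq_zero.mp this
    rcases this with h1 | h1
    · exact absurd h1 (hs i).ne'
    · exact h1
  set μ : ι → ℝ := hM'.1.eigenvalues with hμ
  have hμpos : ∀ i, 0 < μ i := hM'.eigenvalues_pos
  have hcard : (0:ℝ) < (Fintype.card ι : ℝ) := by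
    exact_mod_cast Fintype.card_pos
  have htr : ∑ i, μ i = (Fintype.card ι : ℝ) := by
    rw [← trace_eq_sum_eigs' hM'.1]
    rw [hDh]
    have : ∀ i, (D * M * D) i i = 1 := by
      intro i
      have e1 : (D * M * D) i i = s i * M i i * s i := by
        rw [hD, Matrix.mul_diagonal, Matrix.diagonal_mul]
      rw [e1, show s i * M i i * s i = s i * s i * M i i by ring, hs2,
        inv_mul_cancel₀ (hd i).ne']
    simp [Matrix.trace, Matrix.diag, this]
  have hdet' : (Dᴴ * M * D).det = (∏ i, (M i i)⁻¹) * M.det := by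
    rw [Matrix.det_mul, Matrix.det_mul, hDh, hD, Matrix.det_diagonal]
    have e2 : (∏ i, s i) * (∏ i, s i) = ∏ i, (M i i)⁻¹ := by
      rw [← Finset.prod_mul_distrib]
      exact Finset.prod_congr rfl fun i _ => hs2 i
    calc (∏ i, s i) * M.det * (∏ i, s i) = ((∏ i, s i) * (∏ i, s i)) * M.det := by ring
      _ = (∏ i, (M i i)⁻¹) * M.det := by rw [e2]
  have hprodμ : ∏ i, μ i = (∏ i, (M i i)⁻¹) * M.det := by
    rw [← hdet']
    have := hM'.1.det_eq_prod_eigenvalues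
    convert this.symm using 1
    simp [hμ]
  -- AM-GM
  have amgm := Real.geom_mean_le_arith_mean_weighted Finset.univ
    (fun _ => ((Fintype.card ι : ℝ))⁻¹) μ (fun i _ => by positivity)
    (by rw [Finset.sum_const, Finset.card_univ, nsmul_eq_mul, mul_inv_cancel₀ hcard.ne'])
    (fun i _ => (hμpos i).le)
  have h1 : ∏ i, μ i ^ ((Fintype.card ι : ℝ))⁻¹ ≤ 1 := by
    refine amgm.trans ?_
    rw [← Finset.mul_sum, htr, inv_mul_cancel₀ hcard.ne']
  have h2 : (∏ i, μ i) ^ ((Fintype.card ι : ℝ))⁻¹ ≤ 1 := by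
    rw [← Real.finset_prod_rpow _ _ (fun i _ => (hμpos i).le)]
    exact h1
  have hppos : 0 < ∏ i, μ i := Finset.prod_pos fun i _ => hμpos i
  have h3 : ∏ i, μ i ≤ 1 := by
    have := Real.rpow_le_rpow (Real.rpow_nonneg hppos.le _) h2 hcard.le
    rwa [Real.one_rpow, ← Real.rpow_mul hppos.le, inv_mul_cancel₀ hcard.ne',
      Real.rpow_one] at this
  -- conclude
  have hMiipos : 0 < ∏ i, M i i := Finset.prod_pos fun i _ => hd i
  have hinv : ∏ i, (M i i)⁻¹ = (∏ i, M i i)⁻¹ := by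
    rw [Finset.prod_inv_distrib]
  rw [hprodμ, hinv] at h3
  calc M.det = (∏ i, M i i) * ((∏ i, M i i)⁻¹ * M.det) := by
        field_simp
    _ ≤ (∏ i, M i i) * 1 := by
        exact mul_le_mul_of_nonneg_left h3 hMiipos.le
    _ = ∏ i, M i i := mul_one _
end Aux

/-- The average normalized purity
`χ = (N+1/2)^{⌊n/2⌋} · 𝔼_A[det(V_A)^{-1/2}]` over all balanced bipartitions
satisfies `χ ≥ 1` for every positive definite covariance matrix whose diagonal
`2×2` blocks each have trace at most `2(N+1/2)`. -/
theorem chi_ge_one (n : ℕ) (hn : 2 ≤ n) (N : ℝ) (hN : 0 ≤ N)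
    (V : Matrix (Fin n × Fin 2) (Fin n × Fin 2) ℝ) (hpd : V.PosDef)
    (henergy : ∀ k : Fin n, V (k, 0) (k, 0) + V (k, 1) (k, 1) ≤ 2*(N + 1/2)) :
    1 ≤ (N + 1/2)^(n/2) *
      (((Finset.univ.powersetCard (n/2) : Finset (Finset (Fin n))).card : ℝ)⁻¹ *
        ∑ A ∈ Finset.univ.powersetCard (n/2), (Real.sqrt (subdet n V A))⁻¹) := by
  have hc : (0:ℝ) < N + 1/2 := by linarith
  have hcp : (0:ℝ) < (N + 1/2)^(n/2) := pow_pos hc _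
  have key : ∀ A ∈ Finset.univ.powersetCard (n/2),
      ((N + 1/2)^(n/2))⁻¹ ≤ (Real.sqrt (subdet n V A))⁻¹ := by
    intro A hA
    obtain ⟨-, hAcard⟩ := Finset.mem_powersetCard.mp hA
    set e : {i : Fin n // i ∈ A} × Fin 2 → Fin n × Fin 2 :=
      fun p => (p.1.1, p.2) with he
    have heinj : Function.Injective e := by
      intro p q h
      simp only [he, Prod.mk.injEq] at h
      exact Prod.ext (Subtype.ext h.1) h.2
    have hW : (V.submatrix e e).PosDef := posdef_submatrix' hpd e heinj
    have hsub : subdet n V A = (V.submatrix e e).det := rfl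
    have hdetpos : 0 < subdet n V A := by rw [hsub]; exact hW.det_pos
    have hdetle : subdet n V A ≤ ((N + 1/2)^(n/2))^2 := by
      have h1 : (V.submatrix e e).det ≤ ∏ p : {i : Fin n // i ∈ A} × Fin 2,
          V (e p) (e p) := hadamard' hW
      have h2 : ∏ p : {i : Fin n // i ∈ A} × Fin 2, V (e p) (e p)
          = ∏ i : {i : Fin n // i ∈ A},
              (V (i.1, 0) (i.1, 0) * V (i.1, 1) (i.1, 1)) := by
        rw [Fintype.prod_prod_type]
        exact Finset.prod_congr rfl fun i _ => by rw [Fin.prod_univ_two]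
      have h3 : ∀ i : {i : Fin n // i ∈ A},
          V (i.1, 0) (i.1, 0) * V (i.1, 1) (i.1, 1) ≤ (N + 1/2)^2 := by
        intro i
        have ha := diag_pos' hpd (i.1, 0)
        have hb := diag_pos' hpd (i.1, 1)
        have hE := henergy i.1
        nlinarith [sq_nonneg (V (i.1, 0) (i.1, 0) - V (i.1, 1) (i.1, 1)),
          sq_nonneg (V (i.1, 0) (i.1, 0) + V (i.1, 1) (i.1, 1) - 2*(N + 1/2))]
      have h4 : ∏ i : {i : Fin n // i ∈ A},
          (V (i.1, 0) (i.1, 0) * V (i.1, 1) (i.1, 1))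
            ≤ ∏ _i : {i : Fin n // i ∈ A}, (N + 1/2)^2 := by
        refine Finset.prod_le_prod (fun i _ => ?_) (fun i _ => h3 i)
        have ha := diag_pos' hpd (i.1, 0)
        have hb := diag_pos' hpd (i.1, 1)
        positivity
      have h5 : ∏ _i : {i : Fin n // i ∈ A}, (N + 1/2)^2
          = ((N + 1/2)^(n/2))^2 := by
        rw [Finset.prod_const, Finset.card_univ, Fintype.card_coe, hAcard, ← pow_mul,
          ← pow_mul, Nat.mul_comm]
      rw [hsub]
      calc (V.submatrix e e).det ≤ _ := h1
        _ = _ := h2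
        _ ≤ _ := h4
        _ = _ := h5
    have hsqrt : Real.sqrt (subdet n V A) ≤ (N + 1/2)^(n/2) := by
      have := Real.sqrt_le_sqrt hdetle
      rwa [Real.sqrt_sq hcp.le] at this
    exact inv_anti₀ (Real.sqrt_pos.mpr hdetpos) hsqrt
  set S := (Finset.univ.powersetCard (n/2) : Finset (Finset (Fin n))) with hS
  have hk : 0 < S.card := by
    rw [hS, Finset.card_powersetCard, Finset.card_univ, Fintype.card_fin]
    exact Nat.choose_pos (Nat.div_le_self n 2)
  have hkR : (0:ℝ) < (S.card : ℝ) := by exact_mod_cast hk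
  have hsum : (S.card : ℝ) * ((N + 1/2)^(n/2))⁻¹
      ≤ ∑ A ∈ S, (Real.sqrt (subdet n V A))⁻¹ := by
    calc (S.card : ℝ) * ((N + 1/2)^(n/2))⁻¹
        = ∑ _A ∈ S, ((N + 1/2)^(n/2))⁻¹ := by
          rw [Finset.sum_const, nsmul_eq_mul]
      _ ≤ _ := Finset.sum_le_sum key
  calc (1:ℝ) = (N + 1/2)^(n/2) *
        ((S.card : ℝ)⁻¹ * ((S.card : ℝ) * ((N + 1/2)^(n/2))⁻¹)) := by
        field_simp
    _ ≤ (N + 1/2)^(n/2) *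
        ((S.card : ℝ)⁻¹ * ∑ A ∈ S, (Real.sqrt (subdet n V A))⁻¹) := by
        refine mul_le_mul_of_nonneg_left ?_ hcp.le
        exact mul_le_mul_of_nonneg_left hsum (inv_nonneg.mpr hkR.le)
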